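/- Let A be a bounded linear operator on a complex Hilbert space with polar decomposition A = U|A|, and let t ∈ [0,1], r ≥ 1. Then w(A)^r ≤ (1/4)‖ |A|^{2tr} + |A|^{2(1−t)r} ‖ + (1/2) w(|A|^t U |A|^{1−t})^r. -/

import Mathlib

noncomputable section
open ContinuousLinearMap

variable {H : Type*} [NormedAddCommGroup H] [InnerProductSpace ℂ H] [CompleteSpace H]

/-- The numerical radius of a bounded operator. -/
def nrad (A : H →L[ℂ] H) : ℝ :=
  sSup {r : ℝ | ∃ x : H, ‖x‖ = 1 ∧ r = ‖(inner ℂ (A x) x : ℂ)‖}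

/-- The absolute value |A| = (A*A)^(1/2) via continuous functional calculus. -/
def oabs (A : H →L[ℂ] H) : H →L[ℂ] H := cfc Real.sqrt (adjoint A * A)

/-- The 2×2 block operator matrix [[A,B],[C,D]] on the Hilbert space H ⊕ H. -/
def blk (A B C D : H →L[ℂ] H) : WithLp 2 (H × H) →L[ℂ] WithLp 2 (H × H) :=
  ((WithLp.prodContinuousLinearEquiv 2 ℂ H H).symm.toContinuousLinearMap).comp
    ((((A.comp (fst ℂ H H)) + B.comp (snd ℂ H H)).prod
      ((C.comp (fst ℂ H H)) + D.comp (snd ℂ H H))).comp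
      (WithLp.prodContinuousLinearEquiv 2 ℂ H H).toContinuousLinearMap)

/-! ### Auxiliary lemmas -/

private lemma rpow_cont {s : ℝ} (hs : 0 ≤ s) : Continuous fun x : ℝ => x ^ s :=
  continuous_iff_continuousAt.mpr fun x => Real.continuousAt_rpow_const x s (Or.inr hs)

private lemma nrad_nonneg' (A : H →L[ℂ] H) : 0 ≤ nrad A :=
  Real.sSup_nonneg fun r hr => by obtain ⟨x, _, rfl⟩ := hr; exact norm_nonneg _

private lemma nrad_le' (A : H →L[ℂ] H) {c : ℝ} (hc : 0 ≤ c)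
    (h : ∀ x : H, ‖x‖ = 1 → ‖(inner ℂ (A x) x : ℂ)‖ ≤ c) : nrad A ≤ c :=
  Real.sSup_le (fun r hr => by obtain ⟨x, hx, rfl⟩ := hr; exact h x hx) hc

private lemma inner_le_nrad (A : H →L[ℂ] H) (y : H) :
    ‖(inner ℂ (A y) y : ℂ)‖ ≤ nrad A * ‖y‖ ^ 2 := by
  rcases eq_or_ne y 0 with rfl | hy
  · simp
  · have hy' : ‖y‖ ≠ 0 := norm_ne_zero_iff.mpr hy
    set c : ℂ := (‖y‖ : ℂ)⁻¹ with hcdef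
    have hcn : ‖c‖ = ‖y‖⁻¹ := by
      simp [hcdef]
    have hyu : ‖c • y‖ = 1 := by
      rw [norm_smul, hcn, inv_mul_cancel₀ hy']
    have hb : BddAbove {r : ℝ | ∃ x : H, ‖x‖ = 1 ∧ r = ‖(inner ℂ (A x) x : ℂ)‖} := by
      refine ⟨‖A‖, ?_⟩
      rintro r ⟨x, hx, rfl⟩
      calc ‖(inner ℂ (A x) x : ℂ)‖ ≤ ‖A x‖ * ‖x‖ := norm_inner_le_norm _ _
        _ ≤ (‖A‖ * ‖x‖) * ‖x‖ := by
            gcongr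
            exact le_opNorm A x
        _ = ‖A‖ := by rw [hx]; ring
    have hle : ‖(inner ℂ (A (c • y)) (c • y) : ℂ)‖ ≤ nrad A :=
      le_csSup hb ⟨c • y, hyu, rfl⟩
    have hinner : (inner ℂ (A (c • y)) (c • y) : ℂ)
        = (starRingEnd ℂ) c * (c * inner ℂ (A y) y) := by
      rw [map_smul, inner_smul_left, inner_smul_right]
    rw [hinner] at hle
    have h2 : ‖(starRingEnd ℂ) c * (c * (inner ℂ (A y) y : ℂ))‖
        = ‖y‖⁻¹ * (‖y‖⁻¹ * ‖(inner ℂ (A y) y : ℂ)‖) := by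
      rw [norm_mul, norm_mul, RCLike.norm_conj, hcn]
    rw [h2] at hle
    have hy2 : 0 < ‖y‖ := lt_of_le_of_ne (norm_nonneg _) (Ne.symm hy')
    have hgoal : (‖y‖⁻¹ * (‖y‖⁻¹ * ‖(inner ℂ (A y) y : ℂ)‖)) * ‖y‖ ^ 2
        = ‖(inner ℂ (A y) y : ℂ)‖ * ((‖y‖⁻¹ * ‖y‖) * (‖y‖⁻¹ * ‖y‖)) := by ring
    calc ‖(inner ℂ (A y) y : ℂ)‖
        = (‖y‖⁻¹ * (‖y‖⁻¹ * ‖(inner ℂ (A y) y : ℂ)‖)) * ‖y‖ ^ 2 := by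
          rw [hgoal, inv_mul_cancel₀ hy', one_mul, mul_one]
      _ ≤ nrad A * ‖y‖ ^ 2 := by gcongr
  
private lemma contraction {U : H →L[ℂ] H}
    (hiso : ∀ x ∈ (LinearMap.ker (U : H →ₗ[ℂ] H))ᗮ, ‖U x‖ = ‖x‖) (y : H) : ‖U y‖ ≤ ‖y‖ := by
  haveI : CompleteSpace (LinearMap.ker (U : H →ₗ[ℂ] H)) :=
    (ContinuousLinearMap.isClosed_ker U).completeSpace_coe
  set K := LinearMap.ker (U : H →ₗ[ℂ] H) with hK
  set p : H := (K.orthogonalProjection y : H) with hp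
  have hpK : p ∈ K := (K.orthogonalProjection y).2
  have hyp : y - p ∈ Kᗮ := Submodule.sub_starProjection_mem_orthogonal (K := K) y
  have h1 : U y = U (y - p) := by
    have hUp : U p = 0 := hpK
    rw [map_sub, hUp, sub_zero]
  have h2 : ‖U (y - p)‖ = ‖y - p‖ := hiso _ hyp
  have horth : (inner ℂ p (y - p) : ℂ) = 0 :=
    Submodule.inner_right_of_mem_orthogonal hpK hyp
  have h3 : ‖y‖ ^ 2 = ‖p‖ ^ 2 + ‖y - p‖ ^ 2 := by
    have hsplit : p + (y - p) = y := by abel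
    have h3' := @norm_add_sq ℂ _ _ _ _ p (y - p)
    rw [hsplit, horth] at h3'
    simpa using h3'
  have h4 : ‖y - p‖ ^ 2 ≤ ‖y‖ ^ 2 := by nlinarith [sq_nonneg ‖p‖]
  rw [h1, h2]
  calc ‖y - p‖ = Real.sqrt (‖y - p‖ ^ 2) := (Real.sqrt_sq (norm_nonneg _)).symm
    _ ≤ Real.sqrt (‖y‖ ^ 2) := Real.sqrt_le_sqrt h4
    _ = ‖y‖ := Real.sqrt_sq (norm_nonneg _)

private lemma jens {p q r : ℝ} (hp : 0 ≤ p) (hq : 0 ≤ q) (hr : 1 ≤ r) :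
    ((p + q) / 2) ^ r ≤ (p ^ r + q ^ r) / 2 := by
  have h := (convexOn_rpow hr).2 (Set.mem_Ici.mpr hp) (Set.mem_Ici.mpr hq)
    (by norm_num : (0:ℝ) ≤ 1/2) (by norm_num : (0:ℝ) ≤ 1/2) (by norm_num)
  simp only [smul_eq_mul] at h
  calc ((p + q) / 2) ^ r = (1/2 * p + 1/2 * q) ^ r := by ring_nf
    _ ≤ 1/2 * p ^ r + 1/2 * q ^ r := h
    _ = (p ^ r + q ^ r) / 2 := by ring

set_option maxHeartbeats 1000000 in
theorem stmt_2 (A U : H →L[ℂ] H)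
    (hU : A = U * oabs A)
    (hker : LinearMap.ker (U : H →ₗ[ℂ] H) = (LinearMap.range (oabs A : H →ₗ[ℂ] H))ᗮ)
    (hiso : ∀ x ∈ (LinearMap.ker (U : H →ₗ[ℂ] H))ᗮ, ‖U x‖ = ‖x‖)
    (t r : ℝ) (ht : t ∈ Set.Icc (0 : ℝ) 1) (hr : 1 ≤ r) :
    nrad A ^ r ≤
      (1 / 4) * ‖cfc (fun x : ℝ => x ^ (2 * t * r)) (oabs A)
          + cfc (fun x : ℝ => x ^ (2 * (1 - t) * r)) (oabs A)‖
      + (1 / 2) * nrad (cfc (fun x : ℝ => x ^ t) (oabs A) * U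
          * cfc (fun x : ℝ => x ^ (1 - t)) (oabs A)) ^ r := by
  obtain ⟨ht0, ht1⟩ := ht
  have ht1' : (0:ℝ) ≤ 1 - t := by linarith
  have hr0 : (0:ℝ) < r := lt_of_lt_of_le one_pos hr
  have h2t : (0:ℝ) ≤ 2 * t := by linarith
  have h2t' : (0:ℝ) ≤ 2 * (1 - t) := by linarith
  have h2tr : (0:ℝ) ≤ 2 * t * r := by nlinarith
  have h2tr' : (0:ℝ) ≤ 2 * (1 - t) * r := by nlinarith
  set P : H →L[ℂ] H := oabs A with hPdef
  -- self-adjointness facts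
  have hTsa : IsSelfAdjoint (adjoint A * A) := by
    rw [IsSelfAdjoint, star_mul, star_eq_adjoint, star_eq_adjoint, adjoint_adjoint]
  have hPsa : IsSelfAdjoint P := cfc_predicate Real.sqrt (adjoint A * A)
  -- spectrum of P is nonneg
  have hspec : ∀ l ∈ spectrum ℝ P, 0 ≤ l := by
    intro l hl
    rw [hPdef, oabs, cfc_map_spectrum Real.sqrt (adjoint A * A)
      hTsa Real.continuous_sqrt.continuousOn] at hl
    obtain ⟨x, -, rfl⟩ := hl
    exact Real.sqrt_nonneg x
  set K : H →L[ℂ] H := cfc (fun x : ℝ => x ^ t) P with hKdef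
  set Q : H →L[ℂ] H := cfc (fun x : ℝ => x ^ (1 - t)) P with hQdef
  set L : H →L[ℂ] H := U * Q with hLdef
  set At : H →L[ℂ] H := K * U * Q with hAtdef
  have hKsa : IsSelfAdjoint K := cfc_predicate _ P
  have hQsa : IsSelfAdjoint Q := cfc_predicate _ P
  -- Q * K = P
  have hQK : Q * K = P := by
    rw [hKdef, hQdef, ← cfc_mul _ _ P ((rpow_cont ht1').continuousOn)
      ((rpow_cont ht0).continuousOn)]
    have : cfc (fun l : ℝ => l ^ (1 - t) * l ^ t) P = cfc (fun l : ℝ => l) P := by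
      apply cfc_congr
      intro l hl
      show l ^ (1 - t) * l ^ t = l
      rcases eq_or_lt_of_le (hspec l hl) with h0 | h0
      · rcases eq_or_ne t 0 with rfl | htne
        · simp [← h0]
        · simp [← h0, Real.zero_rpow htne]
      · rw [← Real.rpow_add h0]
        norm_num
    rw [this, cfc_id' ℝ P hPsa]
  have hA : A = L * K := by
    rw [hLdef, mul_assoc, hQK, ← hU]
  -- the squares
  have hKK : cfc (fun l : ℝ => l ^ (2 * t)) P = K * K := by
    rw [hKdef, ← cfc_mul _ _ P ((rpow_cont ht0).continuousOn) ((rpow_cont ht0).continuousOn)]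
    apply cfc_congr
    intro l hl
    show l ^ (2 * t) = l ^ t * l ^ t
    rcases eq_or_lt_of_le (hspec l hl) with h0 | h0
    · rcases eq_or_ne t 0 with rfl | htne
      · simp
      · have htpos : 0 < t := lt_of_le_of_ne ht0 (Ne.symm htne)
        rw [← h0, Real.zero_rpow htne, Real.zero_rpow (ne_of_gt (by nlinarith : (0:ℝ) < 2 * t)), mul_zero]
    · rw [← Real.rpow_add h0]; ring_nf
  have hQQ : cfc (fun l : ℝ => l ^ (2 * (1 - t))) P = Q * Q := by
    rw [hQdef, ← cfc_mul _ _ P ((rpow_cont ht1').continuousOn) ((rpow_cont ht1').continuousOn)]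
    apply cfc_congr
    intro l hl
    show l ^ (2 * (1 - t)) = l ^ (1 - t) * l ^ (1 - t)
    rcases eq_or_lt_of_le (hspec l hl) with h0 | h0
    · rcases eq_or_ne (1 - t) 0 with h1 | htne
      · rw [h1]; norm_num
      · have htpos : 0 < 1 - t := lt_of_le_of_ne ht1' (Ne.symm htne)
        rw [← h0, Real.zero_rpow htne, Real.zero_rpow (ne_of_gt (by nlinarith : (0:ℝ) < 2 * (1 - t))), mul_zero]
    · rw [← Real.rpow_add h0]; ring_nf
  set M₁ : ℝ := ‖cfc (fun l : ℝ => l ^ (2 * t) + l ^ (2 * (1 - t))) P‖ with hM₁def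
  have hsum : cfc (fun l : ℝ => l ^ (2 * t) + l ^ (2 * (1 - t))) P = K * K + Q * Q := by
    rw [cfc_add P _ _ ((rpow_cont h2t).continuousOn)
      ((rpow_cont h2t').continuousOn), hKK, hQQ]
  -- quadratic form bound
  have hnormsum : ∀ y : H, ‖K y‖ ^ 2 + ‖Q y‖ ^ 2 ≤ M₁ * ‖y‖ ^ 2 := by
    intro y
    have e1 : (inner ℂ ((K * K) y) y : ℂ) = ((‖K y‖ : ℂ)) ^ 2 := by
      have h := adjoint_inner_left K y (K y)
      rw [hKsa.adjoint_eq] at h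
      rw [ContinuousLinearMap.mul_apply, h, inner_self_eq_norm_sq_to_K]
      norm_cast
    have e2 : (inner ℂ ((Q * Q) y) y : ℂ) = ((‖Q y‖ : ℂ)) ^ 2 := by
      have h := adjoint_inner_left Q y (Q y)
      rw [hQsa.adjoint_eq] at h
      rw [ContinuousLinearMap.mul_apply, h, inner_self_eq_norm_sq_to_K]
      norm_cast
    have e3 : (inner ℂ ((cfc (fun l : ℝ => l ^ (2 * t) + l ^ (2 * (1 - t))) P) y) y : ℂ)
        = ((‖K y‖ : ℂ)) ^ 2 + ((‖Q y‖ : ℂ)) ^ 2 := by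
      rw [hsum, add_apply, inner_add_left, e1, e2]
    have e4 : ‖K y‖ ^ 2 + ‖Q y‖ ^ 2
        = ‖(inner ℂ ((cfc (fun l : ℝ => l ^ (2 * t) + l ^ (2 * (1 - t))) P) y) y : ℂ)‖ := by
      rw [e3, ← Complex.ofReal_pow, ← Complex.ofReal_pow, ← Complex.ofReal_add,
        Complex.norm_real, Real.norm_eq_abs, abs_of_nonneg (by positivity)]
    rw [e4]
    calc ‖(inner ℂ ((cfc (fun l : ℝ => l ^ (2 * t) + l ^ (2 * (1 - t))) P) y) y : ℂ)‖
        ≤ ‖(cfc (fun l : ℝ => l ^ (2 * t) + l ^ (2 * (1 - t))) P) y‖ * ‖y‖ :=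
          norm_inner_le_norm _ _
      _ ≤ (M₁ * ‖y‖) * ‖y‖ := by gcongr; exact le_opNorm _ y
      _ = M₁ * ‖y‖ ^ 2 := by ring
  set W : ℝ := nrad At with hWdef
  have hW0 : 0 ≤ W := nrad_nonneg' At
  have hM₁0 : 0 ≤ M₁ := norm_nonneg _
  have hMW : 0 ≤ M₁ + 2 * W := by linarith
  -- key pointwise bound
  have key : ∀ x : H, ‖x‖ = 1 → ‖(inner ℂ (A x) x : ℂ)‖ ≤ (M₁ + 2 * W) / 4 := by
    intro x hx
    set u : H := K x with hu
    set v : H := adjoint L x with hv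
    set c : ℂ := inner ℂ (A x) x with hcdef
    have hc : c = inner ℂ u v := by
      rw [hcdef, hA, ContinuousLinearMap.mul_apply, hv, hu]
      exact (adjoint_inner_right L (K x) x).symm
    set z : ℂ := if c = 0 then 1 else c / ‖c‖ with hzdef
    have hz : ‖z‖ = 1 := by
      rcases eq_or_ne c 0 with h | h
      · simp [hzdef, h]
      · rw [hzdef, if_neg h, norm_div, Complex.norm_real, Real.norm_eq_abs,
          abs_of_nonneg (norm_nonneg c), div_self (norm_ne_zero_iff.mpr h)]
    have hzc : (z * (starRingEnd ℂ) c).re = ‖c‖ := by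
      rcases eq_or_ne c 0 with h | h
      · simp [h]
      · have hnc : ‖c‖ ≠ 0 := norm_ne_zero_iff.mpr h
        rw [hzdef, if_neg h, div_mul_eq_mul_div, Complex.mul_conj,
          Complex.normSq_eq_norm_sq, ← Complex.ofReal_div,
          Complex.ofReal_re, sq, mul_div_assoc, div_self hnc, mul_one]
    set D : H →L[ℂ] H := z • L + K with hDdef
    have hDadj : adjoint D = (starRingEnd ℂ) z • adjoint L + K := by
      rw [hDdef, ← star_eq_adjoint, star_add, star_smul, star_eq_adjoint,
        hKsa.star_eq, RCLike.star_def]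
    -- bound on ‖D y‖ for all y
    have hDy : ∀ y : H, ‖D y‖ ^ 2 ≤ (M₁ + 2 * W) * ‖y‖ ^ 2 := by
      intro y
      have happ : D y = z • (L y) + K y := rfl
      have expand : ‖D y‖ ^ 2
          = ‖z • L y‖ ^ 2 + 2 * (inner ℂ (z • L y) (K y) : ℂ).re + ‖K y‖ ^ 2 := by
        rw [happ]
        have hexp := @norm_add_sq ℂ _ _ _ _ (z • L y) (K y)
        simp only [RCLike.re_to_complex] at hexp
        exact hexp
      have h1 : ‖z • L y‖ = ‖L y‖ := by rw [norm_smul, hz, one_mul]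
      have h2 : (inner ℂ (z • L y) (K y) : ℂ).re ≤ ‖(inner ℂ (At y) y : ℂ)‖ := by
        have hALK : (inner ℂ (At y) y : ℂ) = inner ℂ (L y) (K y) := by
          have hAty : At y = K (L y) := rfl
          have h := adjoint_inner_left K y (L y)
          rw [hKsa.adjoint_eq] at h
          rw [hAty, h]
        rw [inner_smul_left]
        calc ((starRingEnd ℂ) z * (inner ℂ (L y) (K y) : ℂ)).re
            ≤ ‖(starRingEnd ℂ) z * (inner ℂ (L y) (K y) : ℂ)‖ := Complex.re_le_norm _
          _ = ‖(inner ℂ (L y) (K y) : ℂ)‖ := by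
              rw [norm_mul, RCLike.norm_conj, hz, one_mul]
          _ = ‖(inner ℂ (At y) y : ℂ)‖ := by rw [hALK]
      have h3 : ‖(inner ℂ (At y) y : ℂ)‖ ≤ W * ‖y‖ ^ 2 := inner_le_nrad At y
      have h4 : ‖L y‖ ≤ ‖Q y‖ := by
        have : L y = U (Q y) := rfl
        rw [this]
        exact contraction hiso (Q y)
      have h5 : ‖K y‖ ^ 2 + ‖Q y‖ ^ 2 ≤ M₁ * ‖y‖ ^ 2 := hnormsum y
      have h6 : ‖L y‖ ^ 2 ≤ ‖Q y‖ ^ 2 := pow_le_pow_left₀ (norm_nonneg (L y)) h4 2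
      have hre : (inner ℂ (z • L y) (K y) : ℂ).re ≤ W * ‖y‖ ^ 2 := le_trans h2 h3
      rw [expand, h1]
      nlinarith
    -- norm of D
    have hDnorm : ‖D‖ ≤ Real.sqrt (M₁ + 2 * W) := by
      apply opNorm_le_bound _ (Real.sqrt_nonneg _)
      intro y
      calc ‖D y‖ = Real.sqrt (‖D y‖ ^ 2) := (Real.sqrt_sq (norm_nonneg _)).symm
        _ ≤ Real.sqrt ((M₁ + 2 * W) * ‖y‖ ^ 2) := Real.sqrt_le_sqrt (hDy y)
        _ = Real.sqrt (M₁ + 2 * W) * ‖y‖ := by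
            rw [Real.sqrt_mul hMW, Real.sqrt_sq (norm_nonneg y)]
    -- lower bound via adjoint
    have hDadjx : adjoint D x = (starRingEnd ℂ) z • v + u := by
      rw [hDadj]; rfl
    have hcross : (inner ℂ ((starRingEnd ℂ) z • v) u : ℂ).re = ‖c‖ := by
      have hvu : (inner ℂ v u : ℂ) = (starRingEnd ℂ) c := by
        rw [hc]; exact (inner_conj_symm v u).symm
      rw [inner_smul_left, starRingEnd_self_apply, hvu]
      exact hzc
    have hadjx_sq : ‖adjoint D x‖ ^ 2 = ‖v‖ ^ 2 + 2 * ‖c‖ + ‖u‖ ^ 2 := by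
      rw [hDadjx]
      have hexp := @norm_add_sq ℂ _ _ _ _ ((starRingEnd ℂ) z • v) u
      simp only [RCLike.re_to_complex] at hexp
      rw [hexp, hcross]
      congr 2
      rw [norm_smul, RCLike.norm_conj, hz, one_mul]
    have hcs : 2 * ‖c‖ ≤ ‖u‖ ^ 2 + ‖v‖ ^ 2 := by
      have h7 : ‖c‖ ≤ ‖u‖ * ‖v‖ := by rw [hc]; exact norm_inner_le_norm _ _
      nlinarith [sq_nonneg (‖u‖ - ‖v‖)]
    have hDx_le : ‖adjoint D x‖ ^ 2 ≤ M₁ + 2 * W := by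
      have h8 : ‖adjoint D x‖ ≤ ‖D‖ := by
        calc ‖adjoint D x‖ ≤ ‖adjoint D‖ * ‖x‖ := le_opNorm _ x
          _ = ‖D‖ := by rw [hx, mul_one, LinearIsometryEquiv.norm_map]
      calc ‖adjoint D x‖ ^ 2 ≤ ‖D‖ ^ 2 :=
            pow_le_pow_left₀ (norm_nonneg _) h8 2
        _ ≤ Real.sqrt (M₁ + 2 * W) ^ 2 :=
            pow_le_pow_left₀ (norm_nonneg _) hDnorm 2
        _ = M₁ + 2 * W := Real.sq_sqrt hMW
    have : 4 * ‖c‖ ≤ M₁ + 2 * W := by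
      have := hadjx_sq ▸ hDx_le
      linarith
    linarith
  have hnr : nrad A ≤ (M₁ + 2 * W) / 4 := nrad_le' A (by linarith) key
  -- the r-power norm
  set N : ℝ := ‖cfc (fun x : ℝ => x ^ (2 * t * r)) P
      + cfc (fun x : ℝ => x ^ (2 * (1 - t) * r)) P‖ with hNdef
  have hNe : cfc (fun x : ℝ => x ^ (2 * t * r)) P
      + cfc (fun x : ℝ => x ^ (2 * (1 - t) * r)) P
      = cfc (fun l : ℝ => l ^ (2 * t * r) + l ^ (2 * (1 - t) * r)) P := by
    rw [cfc_add P _ _ ((rpow_cont h2tr).continuousOn)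
      ((rpow_cont h2tr').continuousOn)]
  have hN0 : 0 ≤ N := norm_nonneg _
  have hNbound : ∀ l ∈ spectrum ℝ P, l ^ (2 * t * r) + l ^ (2 * (1 - t) * r) ≤ N := by
    intro l hl
    have := norm_apply_le_norm_cfc (fun l : ℝ => l ^ (2 * t * r) + l ^ (2 * (1 - t) * r)) P hl
      (((rpow_cont h2tr).add (rpow_cont h2tr')).continuousOn) hPsa
    rw [← hNe] at this
    calc l ^ (2 * t * r) + l ^ (2 * (1 - t) * r)
        ≤ |l ^ (2 * t * r) + l ^ (2 * (1 - t) * r)| := le_abs_self _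
      _ ≤ N := by rw [← Real.norm_eq_abs]; exact this
  -- spectral scalar inequality : (M₁ / 2) ^ r ≤ N / 2
  have hrne : r ≠ 0 := ne_of_gt hr0
  have hM₁N : (M₁ / 2) ^ r ≤ N / 2 := by
    have hroot : M₁ ≤ 2 * (N / 2) ^ r⁻¹ := by
      rw [hM₁def]
      apply norm_cfc_le
        (mul_nonneg (by norm_num) (Real.rpow_nonneg (div_nonneg hN0 (by norm_num)) _))
      intro l hl
      have hl0 : 0 ≤ l := hspec l hl
      have hp : 0 ≤ l ^ (2 * t) := Real.rpow_nonneg hl0 _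
      have hq : 0 ≤ l ^ (2 * (1 - t)) := Real.rpow_nonneg hl0 _
      have hj : ((l ^ (2 * t) + l ^ (2 * (1 - t))) / 2) ^ r ≤ N / 2 := by
        have h1 : (l ^ (2 * t)) ^ r = l ^ (2 * t * r) := (Real.rpow_mul hl0 (2 * t) r).symm
        have h2 : (l ^ (2 * (1 - t))) ^ r = l ^ (2 * (1 - t) * r) :=
          (Real.rpow_mul hl0 (2 * (1 - t)) r).symm
        calc ((l ^ (2 * t) + l ^ (2 * (1 - t))) / 2) ^ r
            ≤ ((l ^ (2 * t)) ^ r + (l ^ (2 * (1 - t))) ^ r) / 2 := jens hp hq hr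
          _ = (l ^ (2 * t * r) + l ^ (2 * (1 - t) * r)) / 2 := by rw [h1, h2]
          _ ≤ N / 2 := by have := hNbound l hl; linarith
      have hb0 : 0 ≤ (l ^ (2 * t) + l ^ (2 * (1 - t))) / 2 := by positivity
      have hmono := Real.rpow_le_rpow (Real.rpow_nonneg hb0 r) hj
        (inv_nonneg.mpr (le_of_lt hr0))
      have hXX : ((((l ^ (2 * t) + l ^ (2 * (1 - t))) / 2)) ^ r) ^ r⁻¹
          = (l ^ (2 * t) + l ^ (2 * (1 - t))) / 2 := by
        rw [← Real.rpow_mul hb0, mul_inv_cancel₀ hrne, Real.rpow_one]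
      rw [hXX] at hmono
      rw [Real.norm_eq_abs, abs_of_nonneg (add_nonneg hp hq)]
      linarith
    have hhalf : M₁ / 2 ≤ (N / 2) ^ r⁻¹ := by linarith
    calc (M₁ / 2) ^ r ≤ ((N / 2) ^ r⁻¹) ^ r :=
          Real.rpow_le_rpow (div_nonneg hM₁0 (by norm_num)) hhalf (le_of_lt hr0)
      _ = N / 2 := by
          rw [← Real.rpow_mul (div_nonneg hN0 (by norm_num)), inv_mul_cancel₀ hrne,
            Real.rpow_one]
  -- conclusion
  calc nrad A ^ r ≤ ((M₁ + 2 * W) / 4) ^ r :=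
        Real.rpow_le_rpow (nrad_nonneg' A) hnr (le_of_lt hr0)
    _ = ((M₁ / 2 + W) / 2) ^ r := by congr 1; ring
    _ ≤ ((M₁ / 2) ^ r + W ^ r) / 2 := jens (div_nonneg hM₁0 (by norm_num)) hW0 hr
    _ ≤ (N / 2 + W ^ r) / 2 := by linarith
    _ = 1 / 4 * N + 1 / 2 * W ^ r := by ring
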